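/- Let $\ell \ge 1$, let $a_1, \dots, a_\ell$ be real numbers, let $u_1, \dots, u_\ell$ be distinct complex numbers, and let $\varepsilon > 0$. If $\sum_{i=1}^{\ell} |a_i| \ge \varepsilon$, then there exists some integer $k$ with $0 \le k < \ell$ such that $\left|\sum_{i=1}^{\ell} a_i u_i^k\right| \ge \frac{\varepsilon}{\ell} \cdot \frac{\prod_{i > j} |u_i - u_j|}{\left(\sum_{i=1}^{\ell} \sum_{k=0}^{\ell-1} |u_i|^{2k}\right)^{(\ell-1)/2}}$. -/

import Mathlib

open Finset Matrix Complex

lemma gram_lower (n : ℕ) (W : Matrix (Fin n) (Fin n) ℂ) (x : Fin n → ℂ) :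
    Complex.normSq W.det * ∑ i, Complex.normSq (x i) ≤
      (∑ k, ∑ i, Complex.normSq (W k i)) ^ (n - 1) * ∑ k, Complex.normSq (W.mulVec x k) := by
  classical
  have hG : (Wᴴ * W).IsHermitian := Matrix.isHermitian_conjTranspose_mul_self W
  set lam : Fin n → ℝ := hG.eigenvalues with hlamdef
  have hlam0 : ∀ i, 0 ≤ lam i := Matrix.eigenvalues_conjTranspose_mul_self_nonneg W
  set T : ℝ := ∑ k, ∑ i, Complex.normSq (W k i) with hTdef
  -- trace identity
  have trC : (Wᴴ * W).trace = ∑ i, ((lam i : ℝ) : ℂ) := by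
    conv_lhs => rw [hG.spectral_theorem, Unitary.conjStarAlgAut_apply]
    rw [Matrix.trace_mul_cycle]
    rw [Matrix.mem_unitaryGroup_iff'.mp hG.eigenvectorUnitary.2, one_mul,
      Matrix.trace_diagonal]
    rfl
  have htr : ∑ i, lam i = T := by
    have trC2 : (Wᴴ * W).trace = ((T : ℝ) : ℂ) := by
      rw [Matrix.trace]
      simp only [Matrix.diag_apply, Matrix.mul_apply, Matrix.conjTranspose_apply]
      rw [hTdef]
      push_cast
      rw [Finset.sum_comm]
      congr 1; ext i; congr 1; ext k
      rw [Complex.normSq_eq_conj_mul_self]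
      rfl
    have := trC.symm.trans trC2
    exact_mod_cast (by push_cast at this ⊢; exact this : ((∑ i, lam i : ℝ) : ℂ) = ((T : ℝ) : ℂ)) |> Complex.ofReal_inj.mp
  have hdet : Complex.normSq W.det = ∏ i, lam i := by
    have h1 : (Wᴴ * W).det = ((Complex.normSq W.det : ℝ) : ℂ) := by
      rw [Matrix.det_mul, Matrix.det_conjTranspose]
      rw [Complex.normSq_eq_conj_mul_self]; rfl
    have h2 := hG.det_eq_prod_eigenvalues
    rw [h1] at h2
    have h3 : ((normSq W.det : ℝ) : ℂ) = ((∏ i, hG.eigenvalues i : ℝ) : ℂ) := by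
      rw [h2]; norm_cast
    simp only [hlamdef]
    exact Complex.ofReal_inj.mp h3
  have hTnn : 0 ≤ T := by
    rw [← htr]; exact Finset.sum_nonneg fun i _ => hlam0 i
  have key : ∀ i, Complex.normSq W.det ≤ lam i * T ^ (n - 1) := by
    intro i
    rw [hdet, ← Finset.mul_prod_erase _ _ (Finset.mem_univ i)]
    refine mul_le_mul_of_nonneg_left ?_ (hlam0 i)
    calc ∏ j ∈ Finset.univ.erase i, lam j
        ≤ ∏ _j ∈ Finset.univ.erase i, T := by
          refine Finset.prod_le_prod (fun j _ => hlam0 j) (fun j _ => ?_)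
          rw [← htr]
          exact Finset.single_le_sum (fun k _ => hlam0 k) (Finset.mem_univ j)
      _ = T ^ (n - 1) := by
          rw [Finset.prod_const, Finset.card_erase_of_mem (Finset.mem_univ i),
            Finset.card_univ, Fintype.card_fin]
  -- Rayleigh
  set U : Matrix (Fin n) (Fin n) ℂ := ↑hG.eigenvectorUnitary with hUdef
  set y : Fin n → ℂ := (star U) *ᵥ x with hydef
  have hstary : star y = star x ᵥ* U := by
    rw [hydef, Matrix.star_mulVec, Matrix.star_eq_conjTranspose, Matrix.conjTranspose_conjTranspose]
  have h1 : ((∑ k, Complex.normSq (W.mulVec x k) : ℝ) : ℂ)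
      = ∑ i, ((lam i : ℝ) : ℂ) * ((Complex.normSq (y i) : ℝ) : ℂ) := by
    have lhs1 : ((∑ k, Complex.normSq (W.mulVec x k) : ℝ) : ℂ)
        = star (W *ᵥ x) ⬝ᵥ (W *ᵥ x) := by
      rw [dotProduct]
      push_cast
      congr 1; ext k
      rw [Complex.normSq_eq_conj_mul_self]; rfl
    rw [lhs1, Matrix.star_mulVec, Matrix.dotProduct_mulVec, Matrix.vecMul_vecMul,
      ← Matrix.dotProduct_mulVec]
    conv_lhs => rw [hG.spectral_theorem, Unitary.conjStarAlgAut_apply]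
    rw [← hUdef, ← Matrix.mulVec_mulVec, ← Matrix.mulVec_mulVec, ← hydef,
      Matrix.dotProduct_mulVec, ← hstary]
    simp only [dotProduct, Matrix.mulVec_diagonal, Function.comp_apply, Pi.star_apply]
    refine Finset.sum_congr rfl fun i _ => ?_
    rw [Complex.normSq_eq_conj_mul_self]
    simp only [Complex.star_def, hlamdef]
    exact mul_left_comm ((starRingEnd ℂ) (y i)) _ (y i)
  have h2 : ((∑ i, Complex.normSq (x i) : ℝ) : ℂ) = ((∑ i, Complex.normSq (y i) : ℝ) : ℂ) := by
    have hx : ((∑ i, Complex.normSq (x i) : ℝ) : ℂ) = star x ⬝ᵥ x := by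
      rw [dotProduct]; push_cast
      exact Finset.sum_congr rfl fun i _ => by rw [Complex.normSq_eq_conj_mul_self]; rfl
    have hy : ((∑ i, Complex.normSq (y i) : ℝ) : ℂ) = star y ⬝ᵥ y := by
      rw [dotProduct]; push_cast
      exact Finset.sum_congr rfl fun i _ => by rw [Complex.normSq_eq_conj_mul_self]; rfl
    rw [hx, hy, hstary, hydef, ← Matrix.dotProduct_mulVec, Matrix.mulVec_mulVec,
      Matrix.mem_unitaryGroup_iff.mp hG.eigenvectorUnitary.2, Matrix.one_mulVec]
  have h2real : ∑ i, Complex.normSq (x i) = ∑ i, Complex.normSq (y i) :=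
    Complex.ofReal_inj.mp h2
  have h1real : ∑ k, Complex.normSq (W.mulVec x k) = ∑ i, lam i * Complex.normSq (y i) := by
    refine Complex.ofReal_inj.mp ?_
    rw [h1]; push_cast; rfl
  calc Complex.normSq W.det * ∑ i, Complex.normSq (x i)
      = ∑ i, Complex.normSq W.det * Complex.normSq (y i) := by
        rw [h2real, Finset.mul_sum]
    _ ≤ ∑ i, lam i * T ^ (n - 1) * Complex.normSq (y i) :=
        Finset.sum_le_sum fun i _ =>
          mul_le_mul_of_nonneg_right (key i) (Complex.normSq_nonneg _)
    _ = T ^ (n - 1) * ∑ i, lam i * Complex.normSq (y i) := by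
        rw [Finset.mul_sum]; exact Finset.sum_congr rfl fun i _ => by ring
    _ = T ^ (n - 1) * ∑ k, Complex.normSq (W.mulVec x k) := by rw [h1real]

set_option maxHeartbeats 1000000 in
theorem stmt4 (ℓ : ℕ) (hℓ : 1 ≤ ℓ) (a : Fin ℓ → ℝ) (u : Fin ℓ → ℂ)
    (hu : Function.Injective u) (ε : ℝ) (hε : 0 < ε) (hsum : ε ≤ ∑ i, |a i|) :
    ∃ k < ℓ,
      ε / ℓ * ((∏ i, ∏ j ∈ Finset.univ.filter (· < i), ‖u i - u j‖) /
          (∑ i, ∑ k ∈ Finset.range ℓ, ‖u i‖ ^ (2 * k)) ^ ((ℓ - 1 : ℝ) / 2)) ≤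
        ‖∑ i, (a i : ℂ) * u i ^ k‖ := by
  classical
  have hne : (Finset.univ : Finset (Fin ℓ)).Nonempty := ⟨⟨0, hℓ⟩, Finset.mem_univ _⟩
  set W : Matrix (Fin ℓ) (Fin ℓ) ℂ := fun k i => u i ^ (k : ℕ) with hWdef
  set b : Fin ℓ → ℂ := fun i => (a i : ℂ) with hbdef
  set P : ℝ := ∏ i, ∏ j ∈ Finset.univ.filter (· < i), ‖u i - u j‖ with hPdef
  set B : ℝ := ∑ i, ∑ k ∈ Finset.range ℓ, ‖u i‖ ^ (2 * k) with hBdef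
  have hPnn : 0 ≤ P := Finset.prod_nonneg fun i _ =>
    Finset.prod_nonneg fun j _ => norm_nonneg _
  have hWdet : ‖W.det‖ = P := by
    have hWt : W = (Matrix.vandermonde u)ᵀ := by
      ext k i; simp [hWdef, Matrix.vandermonde, Matrix.transpose_apply]
    rw [hWt, Matrix.det_transpose, Matrix.det_vandermonde, hPdef]
    rw [norm_prod]
    simp_rw [norm_prod]
    exact Finset.prod_comm' (by intro x y; simp [Finset.mem_Ioi, Finset.mem_filter])
  have hBW : (∑ k, ∑ i, Complex.normSq (W k i)) = B := by
    rw [Finset.sum_comm, hBdef]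
    refine Finset.sum_congr rfl fun i _ => ?_
    rw [← Fin.sum_univ_eq_sum_range (fun k => ‖u i‖ ^ (2 * k)) ℓ]
    refine Finset.sum_congr rfl fun k _ => ?_
    rw [hWdef]
    rw [← Complex.sq_norm, norm_pow, ← pow_mul, mul_comm]
  have hBpos : 0 < B := by
    rw [hBdef]
    refine Finset.sum_pos (fun i _ => ?_) hne
    refine Finset.sum_pos' (fun k _ => by positivity) ⟨0, Finset.mem_range.mpr hℓ, by simp⟩
  obtain ⟨k₀, -, hk₀⟩ := Finset.exists_max_image Finset.univ
    (fun k : Fin ℓ => ‖∑ i, (a i : ℂ) * u i ^ (k : ℕ)‖) hne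
  refine ⟨(k₀ : ℕ), k₀.isLt, ?_⟩
  set M : ℝ := ‖∑ i, (a i : ℂ) * u i ^ (k₀ : ℕ)‖ with hMdef
  have hMnn : 0 ≤ M := norm_nonneg _
  have hmulVec : ∀ k : Fin ℓ, W.mulVec b k = ∑ i, (a i : ℂ) * u i ^ (k : ℕ) := by
    intro k
    simp only [Matrix.mulVec, dotProduct, hWdef, hbdef]
    exact Finset.sum_congr rfl fun i _ => mul_comm _ _
  set t : ℝ := B ^ (ℓ - 1) with htdef
  have htpos : 0 < t := pow_pos hBpos _
  have e1 : ε ^ 2 ≤ ℓ * ∑ i, a i ^ 2 := by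
    calc ε ^ 2 ≤ (∑ i, |a i|) ^ 2 := pow_le_pow_left₀ hε.le hsum 2
      _ ≤ (Finset.univ : Finset (Fin ℓ)).card * ∑ i, |a i| ^ 2 :=
          sq_sum_le_card_mul_sum_sq
      _ = ℓ * ∑ i, a i ^ 2 := by simp [_root_.sq_abs]
  have e2 := gram_lower ℓ W b
  rw [hBW] at e2
  have hnb : ∑ i, Complex.normSq (b i) = ∑ i, a i ^ 2 := by
    refine Finset.sum_congr rfl fun i _ => ?_
    rw [hbdef]; rw [Complex.normSq_ofReal, sq]
  have hdet2 : Complex.normSq W.det = P ^ 2 := by rw [← Complex.sq_norm, hWdet]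
  rw [hnb, hdet2] at e2
  have e3 : ∑ k, Complex.normSq (W.mulVec b k) ≤ ℓ * M ^ 2 := by
    calc ∑ k, Complex.normSq (W.mulVec b k) ≤ ∑ _k : Fin ℓ, M ^ 2 := by
          refine Finset.sum_le_sum fun k _ => ?_
          rw [hmulVec k, ← Complex.sq_norm]
          exact pow_le_pow_left₀ (norm_nonneg _) (hk₀ k (Finset.mem_univ k)) 2
      _ = ℓ * M ^ 2 := by simp [Finset.card_univ, mul_comm]
  have hst : Real.sqrt t ^ 2 = t := Real.sq_sqrt htpos.le
  have hstpos : 0 < Real.sqrt t := Real.sqrt_pos.mpr htpos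
  have sq_ineq : (ε * P) ^ 2 ≤ ((ℓ : ℝ) * (Real.sqrt t * M)) ^ 2 := by
    have c1 : ε ^ 2 * P ^ 2 ≤ ((ℓ : ℝ) * ∑ i, a i ^ 2) * P ^ 2 :=
      mul_le_mul_of_nonneg_right e1 (sq_nonneg P)
    have c3 : (ℓ : ℝ) * (P ^ 2 * ∑ i, a i ^ 2) ≤ (ℓ : ℝ) * (t * ∑ k, Complex.normSq (W.mulVec b k)) :=
      mul_le_mul_of_nonneg_left e2 (Nat.cast_nonneg ℓ)
    have c4 : (ℓ : ℝ) * (t * ∑ k, Complex.normSq (W.mulVec b k)) ≤ (ℓ : ℝ) * (t * (ℓ * M ^ 2)) :=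
      mul_le_mul_of_nonneg_left (mul_le_mul_of_nonneg_left e3 htpos.le) (Nat.cast_nonneg ℓ)
    calc (ε * P) ^ 2 = ε ^ 2 * P ^ 2 := by ring
      _ ≤ ((ℓ : ℝ) * ∑ i, a i ^ 2) * P ^ 2 := c1
      _ = (ℓ : ℝ) * (P ^ 2 * ∑ i, a i ^ 2) := by ring
      _ ≤ (ℓ : ℝ) * (t * ∑ k, Complex.normSq (W.mulVec b k)) := c3
      _ ≤ (ℓ : ℝ) * (t * (ℓ * M ^ 2)) := c4
      _ = ((ℓ : ℝ) * (Real.sqrt t * M)) ^ 2 := by rw [mul_pow, mul_pow, hst]; ring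
  have lin : ε * P ≤ (ℓ : ℝ) * (Real.sqrt t * M) := by
    have h1 : 0 ≤ ε * P := mul_nonneg hε.le hPnn
    have h2 : 0 ≤ (ℓ : ℝ) * (Real.sqrt t * M) :=
      mul_nonneg (Nat.cast_nonneg ℓ) (mul_nonneg (Real.sqrt_nonneg t) hMnn)
    calc ε * P = Real.sqrt ((ε * P) ^ 2) := (Real.sqrt_sq h1).symm
      _ ≤ Real.sqrt (((ℓ : ℝ) * (Real.sqrt t * M)) ^ 2) := Real.sqrt_le_sqrt sq_ineq
      _ = (ℓ : ℝ) * (Real.sqrt t * M) := Real.sqrt_sq h2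
  have hD : B ^ (((ℓ : ℝ) - 1) / 2) = Real.sqrt t := by
    have hc : ((ℓ : ℝ) - 1) = ((ℓ - 1 : ℕ) : ℝ) := by
      have := Nat.cast_sub (R := ℝ) hℓ
      simpa using this.symm
    rw [hc, div_eq_mul_one_div, Real.rpow_mul hBpos.le, Real.rpow_natCast,
      ← Real.sqrt_eq_rpow, ← htdef]
  have hℓpos : (0 : ℝ) < ℓ := by exact_mod_cast hℓ
  rw [hD, div_mul_div_comm, div_le_iff₀ (mul_pos hℓpos hstpos)]
  calc ε * P ≤ (ℓ : ℝ) * (Real.sqrt t * M) := lin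
    _ = M * ((ℓ : ℝ) * Real.sqrt t) := by ring
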